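/- arXiv:1603.07006 — 5 statements merged into one kernel-verified Lean document; each statement's English description precedes it below -/
import Mathlib

section
/- Let n be a natural number, let f be a real polynomial of degree at most n, and let x, y be real numbers with x ≠ -k for every k ∈ {0, 1, …, n}. Then f(x+y) = x · C(x+n, n) · ∑_{k=0}^{n} (-1)^k · C(n, k) · f(y-k) / (x+k), where C(x+n, n) denotes the generalized binomial coefficient (∏_{i=1}^{n} (x+i)) / n!. -/
open Polynomial Finset

lemma prod_fact' (m : ℕ) : ∏ j ∈ range m, ((j : ℝ) + 1) = m.factorial := by
  induction m with
  | zero => simp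
  | succ t ih => rw [Finset.prod_range_succ, ih, Nat.factorial_succ]; push_cast; ring

lemma prod_erase_eval (m n : ℕ) (h : m ≤ n) :
    ∏ j ∈ (range (n+1)).erase m, ((j:ℝ) - m) = (-1)^m * m.factorial * (n-m).factorial := by
  have hsplit : (range (n+1)).erase m = range m ∪ Ico (m+1) (n+1) := by
    ext j
    simp only [mem_erase, mem_range, mem_union, mem_Ico]
    omega
  have hdisj : Disjoint (range m) (Ico (m+1) (n+1)) := by
    rw [Finset.disjoint_left]; intro j hj hj'
    simp only [mem_range] at hj; simp only [mem_Ico] at hj'; omega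
  rw [hsplit, Finset.prod_union hdisj]
  have h1 : ∏ j ∈ range m, ((j : ℝ) - m) = (-1)^m * m.factorial := by
    rw [← Finset.prod_range_reflect]
    have h : ∀ j ∈ range m, ((m - 1 - j : ℕ) : ℝ) - m = (-1) * ((j:ℝ)+1) := by
      intro j hj
      rw [mem_range] at hj
      have e : (m - 1 - j : ℕ) = m - (j+1) := by omega
      rw [e, Nat.cast_sub (by omega)]
      push_cast; ring
    rw [Finset.prod_congr rfl h, Finset.prod_mul_distrib, Finset.prod_const, prod_fact']
    simp
  have h2 : ∏ j ∈ Ico (m+1) (n+1), ((j : ℝ) - m) = (n - m).factorial := by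
    rw [Finset.prod_Ico_eq_prod_range]
    have e : n + 1 - (m+1) = n - m := by omega
    rw [e]
    have : ∀ j ∈ range (n-m), ((m + 1 + j : ℕ) : ℝ) - m = (j:ℝ) + 1 := by
      intro j hj; push_cast; ring
    rw [Finset.prod_congr rfl this, prod_fact']
  rw [h1, h2]

/-- Melzak's identity: for a real polynomial `f` of degree at most `n` and reals `x, y`
with `x ≠ -k` for all `k ∈ {0, …, n}`,
`f(x+y) = x · C(x+n, n) · ∑_{k=0}^{n} (-1)^k C(n,k) f(y-k)/(x+k)`,
where `C(x+n, n) = (∏_{i=1}^{n} (x+i)) / n!`. -/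
theorem melzak_identity (n : ℕ) (f : Polynomial ℝ) (hf : f.natDegree ≤ n)
    (x y : ℝ) (hx : ∀ k : ℕ, k ≤ n → x ≠ -(k : ℝ)) :
    f.eval (x + y) =
      x * ((∏ i ∈ Finset.Icc 1 n, (x + (i : ℝ))) / (n.factorial : ℝ)) *
        ∑ k ∈ Finset.range (n + 1),
          (-1 : ℝ) ^ k * (n.choose k : ℝ) * f.eval (y - (k : ℝ)) / (x + (k : ℝ)) := by
  classical
  have hnf : (n.factorial : ℝ) ≠ 0 := Nat.cast_ne_zero.mpr n.factorial_ne_zero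
  set F : Polynomial ℝ := f.comp (X + C y) with hF
  set G : Polynomial ℝ := ∑ k ∈ range (n+1),
      C ((-1:ℝ)^k * (n.choose k) * f.eval (y - k) / n.factorial) *
        ∏ j ∈ (range (n+1)).erase k, (X + C (j:ℝ)) with hG
  -- degrees
  have hdegF : F.natDegree ≤ n := by
    refine (Polynomial.natDegree_comp_le).trans ?_
    have : (X + C y : Polynomial ℝ).natDegree = 1 := by
      simpa using Polynomial.natDegree_X_add_C y
    rw [this, mul_one]; exact hf
  have hdegG : G.natDegree ≤ n := by
    refine Polynomial.natDegree_sum_le_of_forall_le _ _ ?_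
    intro k hk
    refine (Polynomial.natDegree_mul_le).trans ?_
    have h2 : (∏ j ∈ (range (n+1)).erase k, (X + C (j:ℝ))).natDegree ≤ n := by
      refine (Polynomial.natDegree_prod_le _ _).trans ?_
      have : ∀ j ∈ (range (n+1)).erase k, (X + C (j:ℝ)).natDegree = 1 := by
        intro j hj; simpa using Polynomial.natDegree_X_add_C (j:ℝ)
      rw [Finset.sum_congr rfl this, Finset.sum_const, smul_eq_mul, mul_one,
        Finset.card_erase_of_mem hk]
      simp
    have h1 := Polynomial.natDegree_C ((-1:ℝ)^k * (n.choose k) * f.eval (y - k) / n.factorial)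
    omega
  -- evaluation of G at -m
  have hGeval : ∀ m : ℕ, m ≤ n → G.eval (-(m:ℝ)) = f.eval (y - m) := by
    intro m hm
    have hmmem : m ∈ range (n+1) := Finset.mem_range.mpr (Nat.lt_succ_of_le hm)
    rw [hG, Polynomial.eval_finset_sum]
    rw [Finset.sum_eq_single m]
    · rw [Polynomial.eval_mul, Polynomial.eval_prod]
      have : ∀ j ∈ (range (n+1)).erase m, (X + C (j:ℝ)).eval (-(m:ℝ)) = (j:ℝ) - m := by
        intro j hj; simp; ring
      rw [Finset.prod_congr rfl this, prod_erase_eval m n hm, Polynomial.eval_C]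
      have hch : (n.choose m : ℝ) * ((m.factorial : ℝ) * ((n-m).factorial : ℝ))
          = n.factorial := by
        rw_mod_cast [← Nat.choose_mul_factorial_mul_factorial hm]
        push_cast; ring
      have hs : ((-1:ℝ)^m) * ((-1:ℝ)^m) = 1 := by
        rw [← pow_add, ← two_mul, pow_mul]; norm_num
      have key : (-1:ℝ)^m * (n.choose m) * f.eval (y-m) / n.factorial *
            ((-1:ℝ)^m * m.factorial * (n-m).factorial)
          = f.eval (y-m) * ((((-1:ℝ)^m) * ((-1:ℝ)^m)) *
            ((n.choose m : ℝ) * ((m.factorial : ℝ) * ((n-m).factorial : ℝ))) / n.factorial) := by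
        ring
      rw [key, hs, hch, one_mul, div_self hnf, mul_one]
    · intro k hk hkm
      rw [Polynomial.eval_mul, Polynomial.eval_prod]
      have hz : (X + C ((m:ℕ):ℝ) : Polynomial ℝ).eval (-(m:ℝ)) = 0 := by simp
      rw [Finset.prod_eq_zero (Finset.mem_erase.mpr ⟨Ne.symm hkm, hmmem⟩) hz, mul_zero]
    · intro hm'; exact absurd hmmem hm'
  -- F = G
  have hFG : F = G := by
    have hz : F - G = 0 := by
      apply Polynomial.eq_zero_of_natDegree_lt_card_of_eval_eq_zero (F - G)
        (f := fun i : Fin (n+1) => -(i : ℝ))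
      · intro i j hij
        have h1 : ((i:ℕ) : ℝ) = ((j:ℕ):ℝ) := by
          have := neg_injective hij
          exact_mod_cast this
        exact Fin.ext (Nat.cast_injective h1)
      · intro i
        rw [Polynomial.eval_sub, hGeval i (Nat.lt_succ_iff.mp i.isLt)]
        have hFe : F.eval (-((i:ℕ):ℝ)) = f.eval (y - (i:ℕ)) := by
          rw [hF, Polynomial.eval_comp, Polynomial.eval_add, Polynomial.eval_X,
            Polynomial.eval_C]
          norm_num
          ring_nf
        rw [hFe, sub_self]
      · calc (F - G).natDegree ≤ max F.natDegree G.natDegree :=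
              Polynomial.natDegree_sub_le _ _
          _ ≤ n := max_le hdegF hdegG
          _ < Fintype.card (Fin (n+1)) := by simp
    exact sub_eq_zero.mp hz
  -- compute at x
  have hx0 : ∀ k ∈ range (n+1), x + (k:ℝ) ≠ 0 := by
    intro k hk h
    exact hx k (Nat.lt_succ_iff.mp (Finset.mem_range.mp hk)) (by linarith)
  have hLHS : f.eval (x + y) = F.eval x := by
    rw [hF, Polynomial.eval_comp, Polynomial.eval_add, Polynomial.eval_X, Polynomial.eval_C]
  have hprodfull : ∏ j ∈ range (n+1), (x + (j:ℝ)) = x * ∏ i ∈ Icc 1 n, (x + (i:ℝ)) := by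
    rw [Finset.prod_range_succ']
    have : ∏ i ∈ Icc 1 n, (x + (i:ℝ)) = ∏ i ∈ range n, (x + ((i:ℝ)+1)) := by
      rw [← Finset.Ico_add_one_right_eq_Icc, Finset.prod_Ico_eq_prod_range]
      have e : n + 1 - 1 = n := by omega
      rw [e]
      refine Finset.prod_congr rfl fun i hi => ?_
      push_cast; ring
    rw [this]
    push_cast
    ring
  rw [hLHS, hFG, hG, Polynomial.eval_finset_sum, Finset.mul_sum]
  refine Finset.sum_congr rfl fun k hk => ?_
  have hxk : x + (k:ℝ) ≠ 0 := hx0 k hk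
  rw [Polynomial.eval_mul, Polynomial.eval_C, Polynomial.eval_prod]
  have he1 : ∀ j ∈ (range (n+1)).erase k, (X + C (j:ℝ)).eval x = x + j := by
    intro j hj; simp
  rw [Finset.prod_congr rfl he1]
  have he : ∏ j ∈ (range (n+1)).erase k, (x + (j:ℝ))
      = (x * ∏ i ∈ Icc 1 n, (x + (i:ℝ))) / (x + k) := by
    rw [eq_div_iff hxk, mul_comm]
    exact (Finset.mul_prod_erase _ _ hk).trans hprodfull
  rw [he]
  field_simp
end

section
/- Let n and j be natural numbers, let f be a real polynomial of degree at most n, let y be a real number, and let x_0, x_1, …, x_j be pairwise distinct real numbers with x_i ≠ -k for all k ∈ {0, …, n} and i ∈ {0, …, j}. Then ∑_{k=0}^{n} (-1)^k · C(n, k) · f(y-k) / ∏_{i=0}^{j} (x_i + k) = ∑_{i=0}^{j} f(y + x_i) / ( x_i · C(x_i+n, n) · ∏_{ν=0, ν≠i}^{j} (x_ν - x_i) ), where C(x_i+n, n) = (∏_{m=1}^{n} (x_i+m)) / n!. -/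
open Finset Polynomial


lemma lagrange_eval_form {s : Finset ℕ} {v : ℕ → ℝ} (hvs : Set.InjOn v s)
    (g : Polynomial ℝ) (hg : g.degree < s.card) (t : ℝ) :
    g.eval t = ∑ i ∈ s, g.eval (v i) * ∏ m ∈ s.erase i, (t - v m) / (v i - v m) := by
  conv_lhs => rw [Lagrange.eq_interpolate hvs hg]
  rw [Lagrange.interpolate_apply, Polynomial.eval_finset_sum]
  refine Finset.sum_congr rfl fun i hi => ?_
  rw [Polynomial.eval_mul, Polynomial.eval_C, Lagrange.basis, Polynomial.eval_prod]
  congr 1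
  refine Finset.prod_congr rfl fun m hm => ?_
  rw [Lagrange.basisDivisor]
  simp [div_eq_inv_mul]


lemma fact_prod' (k : ℕ) : ∏ i ∈ Finset.range k, (i+1) = k.factorial := by
  induction k with
  | zero => simp
  | succ k ih => rw [Finset.prod_range_succ, ih, Nat.factorial_succ, mul_comm]

lemma prod_sub_nat (k : ℕ) : ∏ m ∈ Finset.range k, (k - m) = k.factorial := by
  rw [← fact_prod' k, ← Finset.prod_range_reflect]
  refine Finset.prod_congr rfl fun j hj => ?_
  rw [Finset.mem_range] at hj; omega

lemma prod_erase_range_sub (n k : ℕ) (hk : k ≤ n) :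
    ∏ m ∈ (Finset.range (n+1)).erase k, ((m:ℝ) - k) =
      (-1)^k * k.factorial * (n-k).factorial := by
  have hsplit : (Finset.range (n+1)).erase k = Finset.range k ∪ Finset.Ico (k+1) (n+1) := by
    ext m; simp [Finset.mem_erase, Finset.mem_range, Finset.mem_Ico]; omega
  have hdisj : Disjoint (Finset.range k) (Finset.Ico (k+1) (n+1)) := by
    simp [Finset.disjoint_left, Finset.mem_range, Finset.mem_Ico]; omega
  rw [hsplit, Finset.prod_union hdisj]
  have h1 : ∏ m ∈ Finset.range k, ((m : ℝ) - k) = (-1)^k * k.factorial := by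
    have : ∏ m ∈ Finset.range k, ((m : ℝ) - k) =
        ∏ m ∈ Finset.range k, (-1) * (((k - m : ℕ) : ℝ)) := by
      refine Finset.prod_congr rfl fun m hm => ?_
      rw [Finset.mem_range] at hm
      rw [Nat.cast_sub hm.le]; ring
    rw [this, Finset.prod_mul_distrib, Finset.prod_const, ← Nat.cast_prod, prod_sub_nat, Finset.card_range]
  have h2 : ∏ m ∈ Finset.Ico (k+1) (n+1), ((m:ℝ) - k) = (n-k).factorial := by
    rw [Finset.prod_Ico_eq_prod_range]
    have hnk : n + 1 - (k+1) = n - k := by omega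
    rw [hnk]
    have : ∏ j ∈ Finset.range (n-k), (((k+1+j : ℕ):ℝ) - k) =
        ∏ j ∈ Finset.range (n-k), ((j+1 : ℕ) : ℝ) := by
      refine Finset.prod_congr rfl fun j hj => ?_
      push_cast; ring
    rw [this]
    exact_mod_cast fact_prod' (n-k)
  rw [h1, h2]

lemma melzak_aux (n : ℕ) (f : Polynomial ℝ) (hf : f.natDegree ≤ n) (y z : ℝ)
    (hz : ∀ k : ℕ, k ≤ n → z + k ≠ 0) :
    ∑ k ∈ Finset.range (n+1), (-1:ℝ)^k * (n.choose k : ℝ) * f.eval (y - k) / (z + k)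
      = f.eval (y + z) / (z * ((∏ m ∈ Finset.Icc 1 n, (z + m)) / (n.factorial : ℝ))) := by
  have hz0 : z ≠ 0 := by simpa using hz 0 (Nat.zero_le n)
  have hrange : Finset.range (n+1) = insert 0 (Finset.Icc 1 n) := by
    ext m; simp [Finset.mem_range, Finset.mem_Icc]; omega
  have hprod : z * ∏ m ∈ Finset.Icc 1 n, (z + (m:ℝ)) = ∏ m ∈ Finset.range (n+1), (z + (m:ℝ)) := by
    rw [hrange, Finset.prod_insert (by simp)]
    simp
  have hPne : ∏ m ∈ Finset.range (n+1), (z + (m:ℝ)) ≠ 0 := by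
    rw [Finset.prod_ne_zero_iff]
    intro m hm
    exact hz m (by simpa [Nat.lt_succ_iff] using hm)
  have hD : z * ((∏ m ∈ Finset.Icc 1 n, (z + (m:ℝ))) / (n.factorial : ℝ)) ≠ 0 := by
    rw [mul_div_assoc'] at *
    apply div_ne_zero
    · rw [hprod]; exact hPne
    · exact_mod_cast n.factorial_ne_zero
  have inj : Set.InjOn (fun k : ℕ => -(k:ℝ)) (Finset.range (n+1)) := by
    intro a _ b _ hab
    simpa using hab
  have hdeg : (f.comp (X + C y)).degree < ((Finset.range (n+1)).card : WithBot ℕ) := by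
    rw [Finset.card_range]
    refine lt_of_le_of_lt (Polynomial.degree_le_natDegree) ?_
    rw [Nat.cast_lt, Polynomial.natDegree_comp, Polynomial.natDegree_X_add_C, mul_one]
    omega
  have lag := lagrange_eval_form inj (f.comp (X + C y)) hdeg z
  rw [eq_div_iff hD, Finset.sum_mul]
  have heval : (f.comp (X + C y)).eval z = f.eval (y + z) := by
    rw [Polynomial.eval_comp]; simp [add_comm]
  rw [← heval, lag]
  refine Finset.sum_congr rfl fun k hk => ?_
  rw [Finset.mem_range, Nat.lt_succ_iff] at hk
  have hPe : (z + k) * ∏ m ∈ (Finset.range (n+1)).erase k, (z + (m:ℝ))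
      = ∏ m ∈ Finset.range (n+1), (z + (m:ℝ)) :=
    Finset.mul_prod_erase (Finset.range (n+1)) (fun m : ℕ => z + (m:ℝ)) (Finset.mem_range.mpr (Nat.lt_succ_of_le hk))
  have hcomp : (f.comp (X + C y)).eval (-(k:ℝ)) = f.eval (y - k) := by
    rw [Polynomial.eval_comp]
    simp
    ring_nf
  have hquot : ∏ m ∈ (Finset.range (n+1)).erase k, (z - -(m:ℝ)) / (-(k:ℝ) - -(m:ℝ))
      = (∏ m ∈ (Finset.range (n+1)).erase k, (z + (m:ℝ))) /
        ((-1)^k * k.factorial * (n-k).factorial) := by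
    rw [Finset.prod_div_distrib]
    rw [show ∏ m ∈ (Finset.range (n+1)).erase k, (z - -(m:ℝ))
      = ∏ m ∈ (Finset.range (n+1)).erase k, (z + (m:ℝ)) from Finset.prod_congr rfl (fun m _ => by ring)]
    rw [show ∏ m ∈ (Finset.range (n+1)).erase k, (-(k:ℝ) - -(m:ℝ))
      = ∏ m ∈ (Finset.range (n+1)).erase k, ((m:ℝ) - k) from Finset.prod_congr rfl (fun m _ => by ring)]
    rw [prod_erase_range_sub n k hk]
  simp only [hcomp, hquot]
  have hzk : z + (k:ℝ) ≠ 0 := hz k hk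
  have hchoose : (n.choose k : ℝ) * (k.factorial : ℝ) * ((n-k).factorial : ℝ) = (n.factorial : ℝ) := by
    exact_mod_cast Nat.choose_mul_factorial_mul_factorial hk
  have hfact : (n.factorial : ℝ) ≠ 0 := by exact_mod_cast n.factorial_ne_zero
  have hkf : (k.factorial : ℝ) ≠ 0 := by exact_mod_cast k.factorial_ne_zero
  have hnkf : ((n-k).factorial : ℝ) ≠ 0 := by exact_mod_cast (n-k).factorial_ne_zero
  have key : z * ∏ m ∈ Finset.Icc 1 n, (z + (m:ℝ))
      = (z + k) * ∏ m ∈ (Finset.range (n+1)).erase k, (z + (m:ℝ)) := by rw [hprod, hPe]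
  field_simp
  rw [mul_assoc _ z, key]
  have h1 : ((-1:ℝ))^k * (-1)^k = 1 := by
    rw [← pow_add, ← two_mul, pow_mul]; norm_num
  linear_combination (eval (y - (k:ℝ)) f * (∏ m ∈ (Finset.range (n+1)).erase k, (z + (m:ℝ))) *
      (z + (k:ℝ)) * ((-1:ℝ)^k * (-1)^k)) * hchoose +
    (eval (y - (k:ℝ)) f * (∏ m ∈ (Finset.range (n+1)).erase k, (z + (m:ℝ))) *
      (z + (k:ℝ)) * (n.factorial:ℝ)) * h1

/-- Generalized Melzak identity (Quaintance–Gould Eq. (7.52)) for polynomials of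
degree at most `n`: for pairwise distinct reals `x_0, …, x_j` with `x_i ≠ -k`,
`∑_{k=0}^{n} (-1)^k C(n,k) f(y-k) / ∏_{i=0}^{j} (x_i+k)
  = ∑_{i=0}^{j} f(y+x_i) / (x_i · C(x_i+n, n) · ∏_{ν≠i} (x_ν - x_i))`. -/
theorem melzak_generalization (n j : ℕ) (f : Polynomial ℝ) (hf : f.natDegree ≤ n)
    (y : ℝ) (x : ℕ → ℝ)
    (hdist : ∀ i₁ i₂ : ℕ, i₁ ≤ j → i₂ ≤ j → i₁ ≠ i₂ → x i₁ ≠ x i₂)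
    (hx : ∀ i k : ℕ, i ≤ j → k ≤ n → x i ≠ -(k : ℝ)) :
    ∑ k ∈ Finset.range (n + 1),
        (-1 : ℝ) ^ k * (n.choose k : ℝ) * f.eval (y - (k : ℝ)) /
          ∏ i ∈ Finset.range (j + 1), (x i + (k : ℝ)) =
      ∑ i ∈ Finset.range (j + 1),
        f.eval (y + x i) /
          (x i * ((∏ m ∈ Finset.Icc 1 n, (x i + (m : ℝ))) / (n.factorial : ℝ)) *
            ∏ ν ∈ (Finset.range (j + 1)).erase i, (x ν - x i)) := by
  have hxk : ∀ i k : ℕ, i ≤ j → k ≤ n → x i + (k:ℝ) ≠ 0 := by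
    intro i k hi hk h
    exact hx i k hi hk (by linarith)
  have hQ : ∀ i : ℕ, i ≤ j → ∏ ν ∈ (Finset.range (j+1)).erase i, (x ν - x i) ≠ 0 := by
    intro i hi
    rw [Finset.prod_ne_zero_iff]
    intro ν hν
    rw [Finset.mem_erase, Finset.mem_range, Nat.lt_succ_iff] at hν
    exact sub_ne_zero_of_ne (hdist ν i hν.2 hi hν.1)
  have inj : Set.InjOn (fun i : ℕ => -(x i)) (Finset.range (j+1)) := by
    intro a ha b hb hab
    simp only [Finset.coe_range, Set.mem_Iio] at ha hb
    by_contra hne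
    exact hdist a b (Nat.lt_succ_iff.mp ha) (Nat.lt_succ_iff.mp hb) hne (by simpa [neg_inj] using hab)
  have pf : ∀ k : ℕ, k ≤ n →
      (1:ℝ) / ∏ i ∈ Finset.range (j+1), (x i + (k:ℝ)) =
      ∑ i ∈ Finset.range (j+1),
        1 / ((x i + (k:ℝ)) * ∏ ν ∈ (Finset.range (j+1)).erase i, (x ν - x i)) := by
    intro k hk
    have hdeg : (1 : Polynomial ℝ).degree < ((Finset.range (j+1)).card : WithBot ℕ) := by
      rw [Polynomial.degree_one, Finset.card_range]
      exact_mod_cast Nat.cast_lt.mpr (Nat.succ_pos j)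
    have lag := lagrange_eval_form inj (1 : Polynomial ℝ) hdeg (k:ℝ)
    simp only [Polynomial.eval_one, one_mul] at lag
    have hPne : ∏ i ∈ Finset.range (j+1), (x i + (k:ℝ)) ≠ 0 := by
      rw [Finset.prod_ne_zero_iff]
      intro i hi
      exact hxk i k (by simpa [Nat.lt_succ_iff] using hi) hk
    rw [div_eq_iff hPne, Finset.sum_mul]
    nth_rewrite 1 [lag]
    refine Finset.sum_congr rfl fun i hi => ?_
    rw [Finset.mem_range, Nat.lt_succ_iff] at hi
    have hterm : ∏ m ∈ (Finset.range (j+1)).erase i, ((k:ℝ) - -(x m)) / (-(x i) - -(x m))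
        = (∏ m ∈ (Finset.range (j+1)).erase i, (x m + (k:ℝ))) /
          (∏ m ∈ (Finset.range (j+1)).erase i, (x m - x i)) := by
      rw [Finset.prod_div_distrib]
      congr 1
      · exact Finset.prod_congr rfl fun m _ => by ring
      · exact Finset.prod_congr rfl fun m _ => by ring
    rw [hterm]
    have hPe : (x i + (k:ℝ)) * ∏ m ∈ (Finset.range (j+1)).erase i, (x m + (k:ℝ))
        = ∏ m ∈ Finset.range (j+1), (x m + (k:ℝ)) :=
      Finset.mul_prod_erase (Finset.range (j+1)) (fun m : ℕ => x m + (k:ℝ))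
        (Finset.mem_range.mpr (Nat.lt_succ_of_le hi))
    have hxik : x i + (k:ℝ) ≠ 0 := hxk i k hi hk
    have hQi := hQ i hi
    field_simp
    linear_combination hPe
  calc
    ∑ k ∈ Finset.range (n + 1),
        (-1 : ℝ) ^ k * (n.choose k : ℝ) * f.eval (y - (k : ℝ)) /
          ∏ i ∈ Finset.range (j + 1), (x i + (k : ℝ))
      = ∑ k ∈ Finset.range (n + 1), ∑ i ∈ Finset.range (j+1),
          (-1 : ℝ) ^ k * (n.choose k : ℝ) * f.eval (y - (k : ℝ)) /
            ((x i + (k:ℝ)) * ∏ ν ∈ (Finset.range (j+1)).erase i, (x ν - x i)) := by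
        refine Finset.sum_congr rfl fun k hk => ?_
        rw [Finset.mem_range, Nat.lt_succ_iff] at hk
        rw [div_eq_mul_one_div, pf k hk, Finset.mul_sum]
        refine Finset.sum_congr rfl fun i hi => ?_
        rw [mul_one_div]
    _ = ∑ i ∈ Finset.range (j+1), ∑ k ∈ Finset.range (n + 1),
          ((-1 : ℝ) ^ k * (n.choose k : ℝ) * f.eval (y - (k : ℝ)) / (x i + (k:ℝ))) /
            (∏ ν ∈ (Finset.range (j+1)).erase i, (x ν - x i)) := by
        rw [Finset.sum_comm]
        refine Finset.sum_congr rfl fun k _ => Finset.sum_congr rfl fun i _ => ?_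
        rw [div_div]
    _ = ∑ i ∈ Finset.range (j + 1),
        f.eval (y + x i) /
          (x i * ((∏ m ∈ Finset.Icc 1 n, (x i + (m : ℝ))) / (n.factorial : ℝ)) *
            ∏ ν ∈ (Finset.range (j + 1)).erase i, (x ν - x i)) := by
        refine Finset.sum_congr rfl fun i hi => ?_
        rw [Finset.mem_range, Nat.lt_succ_iff] at hi
        rw [← Finset.sum_div, melzak_aux n f hf y (x i) (fun k hk => hxk i k hi hk), div_div]
end

section
/- Let n and j be natural numbers, let f be a real polynomial of degree at most n + j, let y be a real number, and let x_0, x_1, …, x_j be pairwise distinct real numbers with x_i ≠ -k for all k ∈ {0, …, n} and i ∈ {0, …, j}. Then ∑_{k=0}^{n} (-1)^k · C(n, k) · f(y-k) / ∏_{i=0}^{j} (x_i + k) = ∑_{i=0}^{j} f(y + x_i) / ( x_i · C(x_i+n, n) · ∏_{ν=0, ν≠i}^{j} (x_ν - x_i) ), where C(x_i+n, n) = (∏_{m=1}^{n} (x_i+m)) / n!. -/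
open Polynomial Finset

private lemma aux_prod_neg {s : Finset ℕ} (f : ℕ → ℝ) :
    ∏ i ∈ s, (-f i) = (-1) ^ s.card * ∏ i ∈ s, f i := by
  calc ∏ i ∈ s, (-f i) = ∏ i ∈ s, ((-1) * f i) := by simp
    _ = (∏ i ∈ s, (-1 : ℝ)) * ∏ i ∈ s, f i := Finset.prod_mul_distrib
    _ = (-1) ^ s.card * ∏ i ∈ s, f i := by rw [Finset.prod_const]

private lemma aux_prod_dvd {s : Finset ℕ} {a : ℕ → ℝ} (ha : Set.InjOn a s) {p : Polynomial ℝ}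
    (h : ∀ i ∈ s, p.eval (a i) = 0) :
    (∏ i ∈ s, (X - C (a i))) ∣ p := by
  refine Finset.prod_dvd_of_coprime ?_ fun i hi => dvd_iff_isRoot.mpr (h i hi)
  intro i hi k hk hik
  exact isCoprime_X_sub_C_of_isUnit_sub
    (IsUnit.mk0 _ (sub_ne_zero_of_ne fun he => hik (ha hi hk he)))

private lemma aux_eq_zero {s : Finset ℕ} {a : ℕ → ℝ} (ha : Set.InjOn a s) {p : Polynomial ℝ}
    (h : ∀ i ∈ s, p.eval (a i) = 0) (hd : p.natDegree < s.card) : p = 0 := by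
  refine Polynomial.eq_zero_of_natDegree_lt_card_of_eval_eq_zero' p (s.image a) ?_ ?_
  · intro r hr
    obtain ⟨i, hi, rfl⟩ := Finset.mem_image.mp hr
    exact h i hi
  · rwa [Finset.card_image_of_injOn ha]

private lemma aux_prod_neg' {R : Type*} [CommRing R] {s : Finset ℕ} (f : ℕ → R) :
    ∏ i ∈ s, (-f i) = (-1) ^ s.card * ∏ i ∈ s, f i := by
  calc ∏ i ∈ s, (-f i) = ∏ i ∈ s, ((-1) * f i) := by simp
    _ = (∏ i ∈ s, (-1 : R)) * ∏ i ∈ s, f i := Finset.prod_mul_distrib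
    _ = (-1) ^ s.card * ∏ i ∈ s, f i := by rw [Finset.prod_const]

private lemma aux_sum_zero (j : ℕ) (x : ℕ → ℝ)
    (hinj : Set.InjOn x (Finset.range (j+1))) (P : Polynomial ℝ)
    (hP : P = 0 ∨ P.natDegree < j) :
    ∑ i ∈ Finset.range (j+1),
      P.eval (x i) / ∏ ν ∈ (Finset.range (j+1)).erase i, (x ν - x i) = 0 := by
  set s := Finset.range (j+1) with hs
  set e : ℕ → ℝ := fun i => ∏ ν ∈ s.erase i, (x ν - x i) with he
  have hcard : ∀ i ∈ s, (s.erase i).card = j := by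
    intro i hi; rw [Finset.card_erase_of_mem hi, hs, Finset.card_range, Nat.add_sub_cancel]
  have hene : ∀ i ∈ s, e i ≠ 0 := by
    intro i hi
    refine Finset.prod_ne_zero_iff.mpr fun ν hν => sub_ne_zero_of_ne ?_
    exact fun hcon => (Finset.mem_erase.mp hν).1 (hinj (Finset.mem_of_mem_erase hν) hi hcon)
  rcases hP with rfl | hP
  · simp
  set Q : Polynomial ℝ :=
    ∑ i ∈ s, C (P.eval (x i) / e i) * ∏ ν ∈ s.erase i, (C (x ν) - X) with hQ
  have hbdeg : ∀ i ∈ s, (∏ ν ∈ s.erase i, (C (x ν) - X)).natDegree = j := by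
    intro i hi
    rw [Polynomial.natDegree_prod]
    · rw [Finset.sum_congr rfl fun ν _ => ?_, Finset.sum_const, hcard i hi, smul_eq_mul, mul_one]
      show (C (x ν) - X).natDegree = 1
      rw [show C (x ν) - X = -(X - C (x ν)) by ring, natDegree_neg, natDegree_X_sub_C]
    · intro ν _
      rw [show C (x ν) - X = -(X - C (x ν)) by ring, neg_ne_zero]
      exact X_sub_C_ne_zero _
  have hQeval : ∀ m ∈ s, Q.eval (x m) = P.eval (x m) := by
    intro m hm
    rw [hQ, Polynomial.eval_finset_sum]
    rw [Finset.sum_eq_single m ?_ (fun hc => absurd hm hc)]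
    · simp only [eval_mul, eval_C, eval_prod, eval_sub, eval_X]
      exact div_mul_cancel₀ _ (hene m hm)
    · intro i hi him
      simp only [eval_mul, eval_C, eval_prod, eval_sub, eval_X]
      rw [Finset.prod_eq_zero (Finset.mem_erase.mpr ⟨him.symm, hm⟩) (by ring), mul_zero]
  have hQdeg : Q.natDegree ≤ j := by
    refine Polynomial.natDegree_sum_le_of_forall_le _ _ fun i hi => ?_
    refine le_trans (natDegree_mul_le) ?_
    rw [natDegree_C, hbdeg i hi, zero_add]
  have hQP : Q = P := by
    have h0 : Q - P = 0 := by
      refine aux_eq_zero (a := x) hinj (fun m hm => ?_) ?_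
      · rw [Polynomial.eval_sub, hQeval m hm, sub_self]
      · calc (Q - P).natDegree ≤ max Q.natDegree P.natDegree := natDegree_sub_le _ _
          _ < j + 1 := max_lt (Nat.lt_succ_of_le hQdeg) (hP.trans (Nat.lt_succ_self j))
          _ = s.card := by rw [hs, Finset.card_range]
    exact sub_eq_zero.mp h0
  have hcoeff : P.coeff j = 0 := coeff_eq_zero_of_natDegree_lt hP
  have hQcoeff : Q.coeff j = (-1) ^ j * ∑ i ∈ s, P.eval (x i) / e i := by
    rw [hQ, Polynomial.finset_sum_coeff, Finset.mul_sum]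
    refine Finset.sum_congr rfl fun i hi => ?_
    rw [Polynomial.coeff_C_mul]
    have hprodeq : (∏ ν ∈ s.erase i, (C (x ν) - X)) =
        (-1) ^ j * ∏ ν ∈ s.erase i, (X - C (x ν)) := by
      rw [show (∏ ν ∈ s.erase i, (C (x ν) - X)) = ∏ ν ∈ s.erase i, -(X - C (x ν)) by
            exact Finset.prod_congr rfl fun ν _ => by ring,
          aux_prod_neg', hcard i hi]
    have hmon : (∏ ν ∈ s.erase i, (X - C (x ν))).Monic :=
      monic_prod_of_monic _ _ fun ν _ => monic_X_sub_C _
    have hdeg2 : (∏ ν ∈ s.erase i, (X - C (x ν))).natDegree = j := by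
      rw [Polynomial.natDegree_prod _ _ fun ν _ => X_sub_C_ne_zero _]
      simp [hcard i hi]
    have : (∏ ν ∈ s.erase i, (X - C (x ν))).coeff j = 1 := by
      rw [← hdeg2]; exact hmon.coeff_natDegree
    rw [hprodeq, show ((-1 : Polynomial ℝ) ^ j) = C ((-1 : ℝ) ^ j) by simp,
      Polynomial.coeff_C_mul, this, mul_one]
    ring
  rw [hQP, hcoeff] at hQcoeff
  rcases mul_eq_zero.mp hQcoeff.symm with h | h
  · exact absurd h (pow_ne_zero _ (by norm_num))
  · exact h

private lemma aux_partial_fraction (j : ℕ) (x : ℕ → ℝ)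
    (hinj : Set.InjOn x (Finset.range (j+1))) (t : ℝ)
    (ht : ∀ i ∈ Finset.range (j+1), x i + t ≠ 0) :
    (∏ i ∈ Finset.range (j+1), (x i + t))⁻¹ =
      ∑ i ∈ Finset.range (j+1),
        ((x i + t) * ∏ ν ∈ (Finset.range (j+1)).erase i, (x ν - x i))⁻¹ := by
  set s := Finset.range (j+1) with hs
  set e : ℕ → ℝ := fun i => ∏ ν ∈ s.erase i, (x ν - x i) with he
  have hcard : ∀ i ∈ s, (s.erase i).card = j := by
    intro i hi; rw [Finset.card_erase_of_mem hi, hs, Finset.card_range, Nat.add_sub_cancel]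
  have hene : ∀ i ∈ s, e i ≠ 0 := by
    intro i hi
    refine Finset.prod_ne_zero_iff.mpr fun ν hν => sub_ne_zero_of_ne ?_
    exact fun hcon => (Finset.mem_erase.mp hν).1 (hinj (Finset.mem_of_mem_erase hν) hi hcon)
  set R : Polynomial ℝ := ∑ i ∈ s, C (1 / e i) * ∏ ν ∈ s.erase i, (C (x ν) + X) with hR
  have hRdeg : R.natDegree ≤ j := by
    refine Polynomial.natDegree_sum_le_of_forall_le _ _ fun i hi => ?_
    refine le_trans natDegree_mul_le ?_
    rw [natDegree_C, zero_add]
    refine le_trans (Polynomial.natDegree_prod_le _ _) ?_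
    have : ∑ ν ∈ s.erase i, (C (x ν) + X).natDegree = ∑ ν ∈ s.erase i, 1 :=
          Finset.sum_congr rfl fun ν _ => by rw [add_comm, natDegree_X_add_C]
    rw [this, Finset.sum_const, hcard i hi, smul_eq_mul, mul_one]
  have hReval : ∀ m ∈ s, R.eval (-(x m)) = 1 := by
    intro m hm
    rw [hR, Polynomial.eval_finset_sum, Finset.sum_eq_single m ?_ (fun hc => absurd hm hc)]
    · simp only [eval_mul, eval_C, eval_prod, eval_add, eval_X]
      have : ∏ ν ∈ s.erase m, (x ν + -x m) = e m := by
        refine Finset.prod_congr rfl fun ν _ => by ring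
      rw [this, one_div, inv_mul_cancel₀ (hene m hm)]
    · intro i hi him
      simp only [eval_mul, eval_C, eval_prod, eval_add, eval_X]
      rw [Finset.prod_eq_zero (Finset.mem_erase.mpr ⟨him.symm, hm⟩) (by ring), mul_zero]
  have hR1 : R = 1 := by
    have hinjneg : Set.InjOn (fun i => -(x i)) s := fun a ha b hb hab =>
      hinj ha hb (neg_injective hab)
    have h0 : R - 1 = 0 := by
      refine aux_eq_zero (a := fun i => -(x i)) hinjneg (fun m hm => ?_) ?_
      · rw [Polynomial.eval_sub, hReval m hm, Polynomial.eval_one, sub_self]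
      · calc (R - 1).natDegree ≤ max R.natDegree (1 : Polynomial ℝ).natDegree :=
              natDegree_sub_le _ _
          _ < j + 1 := by
              rw [Polynomial.natDegree_one]
              exact max_lt (Nat.lt_succ_of_le hRdeg) (Nat.succ_pos j)
          _ = s.card := by rw [hs, Finset.card_range]
    exact sub_eq_zero.mp h0
  have key : ∑ i ∈ s, (1 / e i) * ∏ ν ∈ s.erase i, (x ν + t) = 1 := by
    have := congrArg (Polynomial.eval t) hR1
    rw [hR, Polynomial.eval_finset_sum, Polynomial.eval_one] at this
    simpa only [eval_mul, eval_C, eval_prod, eval_add, eval_X] using this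
  have hfne : ∀ i ∈ s, (∏ ν ∈ s.erase i, (x ν + t)) ≠ 0 :=
    fun i hi => Finset.prod_ne_zero_iff.mpr fun ν hν => ht ν (Finset.mem_of_mem_erase hν)
  calc (∏ i ∈ s, (x i + t))⁻¹
      = (∑ i ∈ s, (1 / e i) * ∏ ν ∈ s.erase i, (x ν + t)) / ∏ i ∈ s, (x i + t) := by
        rw [key, one_div]
    _ = ∑ i ∈ s, ((1 / e i) * ∏ ν ∈ s.erase i, (x ν + t)) / ∏ ν ∈ s, (x ν + t) :=
        Finset.sum_div _ _ _
    _ = ∑ i ∈ s, ((x i + t) * e i)⁻¹ := by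
        refine Finset.sum_congr rfl fun i hi => ?_
        rw [← Finset.mul_prod_erase s _ hi, inv_eq_one_div,
          div_eq_div_iff (mul_ne_zero (ht i hi) (hfne i hi))
            (mul_ne_zero (ht i hi) (hene i hi))]
        have h := hene i hi
        field_simp

private lemma aux_nat_prod (K : ℕ) : (∏ m ∈ Finset.range K, (K - m)) = K.factorial := by
  calc ∏ m ∈ Finset.range K, (K - m)
      = ∏ m ∈ Finset.range K, (K - (K - 1 - m)) := (Finset.prod_range_reflect _ K).symm
    _ = ∏ m ∈ Finset.range K, (m + 1) := Finset.prod_congr rfl fun m hm => by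
        have := Finset.mem_range.mp hm; omega
    _ = K.factorial := Finset.prod_range_add_one_eq_factorial K

private lemma aux_fact (n k : ℕ) (hk : k ≤ n) :
    ∏ m ∈ (Finset.range (n+1)).erase k, ((m : ℝ) - (k : ℝ)) =
      (-1) ^ k * (k.factorial : ℝ) * ((n - k).factorial : ℝ) := by
  have hset : (Finset.range (n+1)).erase k = Finset.range k ∪ Finset.Ico (k+1) (n+1) := by
    ext m
    simp only [Finset.mem_erase, Finset.mem_range, Finset.mem_union, Finset.mem_Ico]
    omega
  have hdisj : Disjoint (Finset.range k) (Finset.Ico (k+1) (n+1)) := by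
    rw [Finset.disjoint_left]
    intro m hm hm2
    simp only [Finset.mem_range, Finset.mem_Ico] at hm hm2
    omega
  rw [hset, Finset.prod_union hdisj]
  have h1 : ∏ m ∈ Finset.range k, ((m:ℝ) - k) = (-1) ^ k * (k.factorial : ℝ) := by
    calc ∏ m ∈ Finset.range k, ((m:ℝ) - k)
        = ∏ m ∈ Finset.range k, -(((k:ℝ)) - m) := Finset.prod_congr rfl fun m _ => by ring
      _ = (-1) ^ k * ∏ m ∈ Finset.range k, ((k:ℝ) - m) := by
          rw [aux_prod_neg', Finset.card_range]
      _ = (-1) ^ k * (k.factorial : ℝ) := by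
          congr 1
          calc ∏ m ∈ Finset.range k, ((k:ℝ) - m)
              = ∏ m ∈ Finset.range k, (((k - m : ℕ) : ℝ)) :=
                Finset.prod_congr rfl fun m hm => by
                  have := Finset.mem_range.mp hm
                  rw [Nat.cast_sub this.le]
            _ = ((∏ m ∈ Finset.range k, (k - m) : ℕ) : ℝ) := (Nat.cast_prod _ _).symm
            _ = (k.factorial : ℝ) := by rw [aux_nat_prod]
  have h2 : ∏ m ∈ Finset.Ico (k+1) (n+1), ((m:ℝ) - k) = ((n - k).factorial : ℝ) := by
    rw [Finset.prod_Ico_eq_prod_range]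
    calc ∏ m ∈ Finset.range (n + 1 - (k + 1)), (((k + 1 + m : ℕ) : ℝ) - k)
        = ∏ m ∈ Finset.range (n - k), (((m + 1 : ℕ) : ℝ)) := by
          rw [show n + 1 - (k + 1) = n - k by omega]
          refine Finset.prod_congr rfl fun m _ => by push_cast; ring
      _ = ((∏ m ∈ Finset.range (n - k), (m + 1) : ℕ) : ℝ) := (Nat.cast_prod _ _).symm
      _ = ((n - k).factorial : ℝ) := by rw [Finset.prod_range_add_one_eq_factorial]
  rw [h1, h2]

/-- Generalized Melzak identity (Quaintance–Gould Eq. (7.52)) for polynomials of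
degree at most `n + j`: for pairwise distinct reals `x_0, …, x_j` with `x_i ≠ -k`,
`∑_{k=0}^{n} (-1)^k C(n,k) f(y-k) / ∏_{i=0}^{j} (x_i+k)
  = ∑_{i=0}^{j} f(y+x_i) / (x_i · C(x_i+n, n) · ∏_{ν≠i} (x_ν - x_i))`. -/
theorem melzak_generalization_strong (n j : ℕ) (f : Polynomial ℝ) (hf : f.natDegree ≤ n + j)
    (y : ℝ) (x : ℕ → ℝ)
    (hdist : ∀ i₁ i₂ : ℕ, i₁ ≤ j → i₂ ≤ j → i₁ ≠ i₂ → x i₁ ≠ x i₂)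
    (hx : ∀ i k : ℕ, i ≤ j → k ≤ n → x i ≠ -(k : ℝ)) :
    ∑ k ∈ Finset.range (n + 1),
        (-1 : ℝ) ^ k * (n.choose k : ℝ) * f.eval (y - (k : ℝ)) /
          ∏ i ∈ Finset.range (j + 1), (x i + (k : ℝ)) =
      ∑ i ∈ Finset.range (j + 1),
        f.eval (y + x i) /
          (x i * ((∏ m ∈ Finset.Icc 1 n, (x i + (m : ℝ))) / (n.factorial : ℝ)) *
            ∏ ν ∈ (Finset.range (j + 1)).erase i, (x ν - x i)) := by
  have hinj : Set.InjOn x (Finset.range (j+1)) := by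
    intro a ha b hb hab
    by_contra hne
    exact hdist a b (Nat.lt_succ_iff.mp (Finset.mem_range.mp ha))
      (Nat.lt_succ_iff.mp (Finset.mem_range.mp hb)) hne hab
  have hxk : ∀ i k : ℕ, i ∈ Finset.range (j+1) → k ∈ Finset.range (n+1) →
      x i + (k : ℝ) ≠ 0 := by
    intro i k hi hk h
    exact hx i k (Nat.lt_succ_iff.mp (Finset.mem_range.mp hi))
      (Nat.lt_succ_iff.mp (Finset.mem_range.mp hk)) (by linarith)
  set c : ℕ → ℝ := fun k => (-1 : ℝ) ^ k * (n.choose k : ℝ) * f.eval (y - (k : ℝ)) with hc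
  set e : ℕ → ℝ := fun i => ∏ ν ∈ (Finset.range (j+1)).erase i, (x ν - x i) with he
  have hene : ∀ i ∈ Finset.range (j+1), e i ≠ 0 := by
    intro i hi
    refine Finset.prod_ne_zero_iff.mpr fun ν hν => sub_ne_zero_of_ne ?_
    exact fun hcon => (Finset.mem_erase.mp hν).1 (hinj (Finset.mem_of_mem_erase hν) hi hcon)
  set T : Polynomial ℝ := ∏ m ∈ Finset.range (n+1), (X - C (-(m:ℝ))) with hT
  set S : Polynomial ℝ :=
    ∑ k ∈ Finset.range (n+1), C (c k) * ∏ m ∈ (Finset.range (n+1)).erase k,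
      (X - C (-(m:ℝ))) with hS
  set G : Polynomial ℝ := S - C (n.factorial : ℝ) * f.comp (X + C y) with hG
  have hinjn : Set.InjOn (fun m : ℕ => -(m:ℝ)) (Finset.range (n+1)) := by
    intro a _ b _ h
    exact Nat.cast_injective (neg_injective h)
  -- eval of T
  have hTeval : ∀ t : ℝ, T.eval t = ∏ m ∈ Finset.range (n+1), (t + (m:ℝ)) := by
    intro t
    rw [hT, Polynomial.eval_prod]
    exact Finset.prod_congr rfl fun m _ => by simp [sub_neg_eq_add]
  have hTne : ∀ i ∈ Finset.range (j+1), T.eval (x i) ≠ 0 := by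
    intro i hi
    rw [hTeval]
    exact Finset.prod_ne_zero_iff.mpr fun m hm => hxk i m hi hm
  -- roots of G
  have hGroot : ∀ k ∈ Finset.range (n+1), G.eval (-(k:ℝ)) = 0 := by
    intro k hk
    have hkn : k ≤ n := Nat.lt_succ_iff.mp (Finset.mem_range.mp hk)
    have hSeval : S.eval (-(k:ℝ)) = (n.factorial : ℝ) * f.eval (y - k) := by
      rw [hS, Polynomial.eval_finset_sum,
        Finset.sum_eq_single k ?_ (fun hcon => absurd hk hcon)]
      · simp only [Polynomial.eval_mul, Polynomial.eval_C, Polynomial.eval_prod,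
          Polynomial.eval_sub, Polynomial.eval_X]
        have : ∏ m ∈ (Finset.range (n+1)).erase k, (-(k:ℝ) - (-(m:ℝ))) =
            ∏ m ∈ (Finset.range (n+1)).erase k, ((m:ℝ) - (k:ℝ)) :=
          Finset.prod_congr rfl fun m _ => by ring
        rw [this, aux_fact n k hkn, hc]
        have hchoose : ((n.choose k : ℕ) : ℝ) * (k.factorial : ℝ) * ((n-k).factorial : ℝ)
            = (n.factorial : ℝ) := by
          rw [← Nat.cast_mul, ← Nat.cast_mul, Nat.choose_mul_factorial_mul_factorial hkn]
        have h1 : (-1:ℝ) ^ k * (-1:ℝ) ^ k = 1 := by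
          rw [← pow_add]; exact Even.neg_one_pow ⟨k, rfl⟩
        linear_combination (f.eval (y - (k:ℝ)) * ((n.choose k : ℝ) * (k.factorial : ℝ) *
          ((n-k).factorial : ℝ))) * h1 + f.eval (y - (k:ℝ)) * hchoose
      · intro b hb hbk
        simp only [Polynomial.eval_mul, Polynomial.eval_C, Polynomial.eval_prod,
          Polynomial.eval_sub, Polynomial.eval_X]
        rw [Finset.prod_eq_zero (Finset.mem_erase.mpr ⟨hbk.symm, hk⟩) (by ring), mul_zero]
    rw [hG, Polynomial.eval_sub, hSeval, Polynomial.eval_mul, Polynomial.eval_C,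
      Polynomial.eval_comp, Polynomial.eval_add, Polynomial.eval_X, Polynomial.eval_C]
    rw [show -(k:ℝ) + y = y - k by ring, sub_self]
  -- divisibility and degrees
  obtain ⟨P, hGP⟩ : T ∣ G := aux_prod_dvd hinjn hGroot
  have hTmon : T.Monic := monic_prod_of_monic _ _ fun _ _ => monic_X_sub_C _
  have hTdeg : T.natDegree = n + 1 := by
    rw [hT, Polynomial.natDegree_prod _ _ fun m _ => X_sub_C_ne_zero _]
    have : ∑ m ∈ Finset.range (n+1), (X - C (-(m:ℝ))).natDegree
        = ∑ m ∈ Finset.range (n+1), 1 :=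
      Finset.sum_congr rfl fun m _ => Polynomial.natDegree_X_sub_C _
    rw [this, Finset.sum_const, Finset.card_range, smul_eq_mul, mul_one]
  have hGdeg : G.natDegree ≤ n + j := by
    refine le_trans (Polynomial.natDegree_sub_le _ _) (max_le ?_ ?_)
    · refine le_trans (Polynomial.natDegree_sum_le_of_forall_le _ _ fun k hk => ?_)
        (Nat.le_add_right n j)
      refine le_trans Polynomial.natDegree_mul_le ?_
      rw [Polynomial.natDegree_C, zero_add]
      refine le_trans (Polynomial.natDegree_prod_le _ _) ?_
      have : ∑ m ∈ (Finset.range (n+1)).erase k, (X - C (-(m:ℝ))).natDegree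
          = ∑ m ∈ (Finset.range (n+1)).erase k, 1 :=
        Finset.sum_congr rfl fun m _ => Polynomial.natDegree_X_sub_C _
      rw [this, Finset.sum_const, Finset.card_erase_of_mem hk, Finset.card_range,
        Nat.add_sub_cancel, smul_eq_mul, mul_one]
    · refine le_trans Polynomial.natDegree_mul_le ?_
      rw [Polynomial.natDegree_C, zero_add, Polynomial.natDegree_comp,
        Polynomial.natDegree_X_add_C, mul_one]
      exact hf
  have hPdeg : P = 0 ∨ P.natDegree < j := by
    by_cases hP0 : P = 0
    · exact Or.inl hP0
    · right
      have hGne : G.natDegree = T.natDegree + P.natDegree := by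
        rw [hGP, Polynomial.natDegree_mul hTmon.ne_zero hP0]
      rw [hGne, hTdeg] at hGdeg
      omega
  -- eval of S at x i
  have hSeval : ∀ i ∈ Finset.range (j+1), S.eval (x i) =
      (n.factorial : ℝ) * f.eval (y + x i) + T.eval (x i) * P.eval (x i) := by
    intro i hi
    have := congrArg (Polynomial.eval (x i)) hGP
    rw [hG, Polynomial.eval_sub, Polynomial.eval_mul, Polynomial.eval_mul, Polynomial.eval_C,
      Polynomial.eval_comp, Polynomial.eval_add, Polynomial.eval_X, Polynomial.eval_C] at this
    rw [show x i + y = y + x i by ring] at this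
    linarith
  -- inner sums
  have hinner : ∀ i ∈ Finset.range (j+1),
      ∑ k ∈ Finset.range (n+1), c k / (x i + k) = S.eval (x i) / T.eval (x i) := by
    intro i hi
    rw [hS, Polynomial.eval_finset_sum, Finset.sum_div]
    refine Finset.sum_congr rfl fun k hk => ?_
    simp only [Polynomial.eval_mul, Polynomial.eval_C, Polynomial.eval_prod,
      Polynomial.eval_sub, Polynomial.eval_X]
    have hprod : ∏ m ∈ (Finset.range (n+1)).erase k, (x i - (-(m:ℝ))) =
        ∏ m ∈ (Finset.range (n+1)).erase k, (x i + (m:ℝ)) :=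
      Finset.prod_congr rfl fun m _ => by ring
    have hTfac : T.eval (x i) = (x i + k) * ∏ m ∈ (Finset.range (n+1)).erase k,
        (x i + (m:ℝ)) := by
      rw [hTeval, ← Finset.mul_prod_erase _ _ hk]
    rw [hprod, hTfac, div_eq_div_iff (hxk i k hi hk)
      (mul_ne_zero (hxk i k hi hk) (Finset.prod_ne_zero_iff.mpr fun m hm =>
        hxk i m hi (Finset.mem_of_mem_erase hm)))]
    ring
  calc ∑ k ∈ Finset.range (n + 1),
        (-1 : ℝ) ^ k * (n.choose k : ℝ) * f.eval (y - (k : ℝ)) /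
          ∏ i ∈ Finset.range (j + 1), (x i + (k : ℝ))
      = ∑ k ∈ Finset.range (n+1), c k * (∏ i ∈ Finset.range (j+1), (x i + (k:ℝ)))⁻¹ :=
        Finset.sum_congr rfl fun k _ => div_eq_mul_inv _ _
    _ = ∑ k ∈ Finset.range (n+1), c k * ∑ i ∈ Finset.range (j+1),
          ((x i + (k:ℝ)) * ∏ ν ∈ (Finset.range (j+1)).erase i, (x ν - x i))⁻¹ := by
        refine Finset.sum_congr rfl fun k hk => ?_
        rw [aux_partial_fraction j x hinj (k:ℝ) (fun i hi => hxk i k hi hk)]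
    _ = ∑ i ∈ Finset.range (j+1), ∑ k ∈ Finset.range (n+1),
          c k * ((x i + (k:ℝ)) * ∏ ν ∈ (Finset.range (j+1)).erase i, (x ν - x i))⁻¹ := by
        simp only [Finset.mul_sum]
        exact Finset.sum_comm
    _ = ∑ i ∈ Finset.range (j+1), (S.eval (x i) / T.eval (x i)) /
          ∏ ν ∈ (Finset.range (j+1)).erase i, (x ν - x i) := by
        refine Finset.sum_congr rfl fun i hi => ?_
        rw [← hinner i hi, Finset.sum_div]
        refine Finset.sum_congr rfl fun k hk => ?_
        rw [div_div, div_eq_mul_inv]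
    _ = ∑ i ∈ Finset.range (j+1),
          ((n.factorial : ℝ) * f.eval (y + x i) / T.eval (x i) /
              (∏ ν ∈ (Finset.range (j+1)).erase i, (x ν - x i)) +
            P.eval (x i) / ∏ ν ∈ (Finset.range (j+1)).erase i, (x ν - x i)) := by
        refine Finset.sum_congr rfl fun i hi => ?_
        rw [hSeval i hi, add_div, mul_comm (T.eval (x i)) (P.eval (x i)),
          mul_div_cancel_right₀ _ (hTne i hi), add_div]
    _ = (∑ i ∈ Finset.range (j+1), (n.factorial : ℝ) * f.eval (y + x i) /
            (T.eval (x i) * ∏ ν ∈ (Finset.range (j+1)).erase i, (x ν - x i))) +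
          ∑ i ∈ Finset.range (j+1),
            P.eval (x i) / ∏ ν ∈ (Finset.range (j+1)).erase i, (x ν - x i) := by
        rw [Finset.sum_add_distrib]
        congr 1
        exact Finset.sum_congr rfl fun i hi => div_div _ _ _
    _ = ∑ i ∈ Finset.range (j+1), (n.factorial : ℝ) * f.eval (y + x i) /
            (T.eval (x i) * ∏ ν ∈ (Finset.range (j+1)).erase i, (x ν - x i)) := by
        rw [aux_sum_zero j x hinj P hPdeg, add_zero]
    _ = ∑ i ∈ Finset.range (j + 1),
        f.eval (y + x i) /
          (x i * ((∏ m ∈ Finset.Icc 1 n, (x i + (m : ℝ))) / (n.factorial : ℝ)) *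
            ∏ ν ∈ (Finset.range (j + 1)).erase i, (x ν - x i)) := by
        refine Finset.sum_congr rfl fun i hi => ?_
        have hij : i ≤ j := Nat.lt_succ_iff.mp (Finset.mem_range.mp hi)
        have hsplit : T.eval (x i) = x i * ∏ m ∈ Finset.Icc 1 n, (x i + (m:ℝ)) := by
          rw [hTeval]
          have hins : Finset.range (n+1) = insert 0 (Finset.Icc 1 n) := by
            ext m
            simp only [Finset.mem_range, Finset.mem_insert, Finset.mem_Icc]
            omega
          rw [hins, Finset.prod_insert (by simp)]
          norm_num
        have hx0 : x i ≠ 0 := by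
          have := hx i 0 hij (Nat.zero_le n)
          simpa using this
        have hIcc : (∏ m ∈ Finset.Icc 1 n, (x i + (m:ℝ))) ≠ 0 := by
          have := hTne i hi
          rw [hsplit] at this
          exact (mul_ne_zero_iff.mp this).2
        have hfac : (n.factorial : ℝ) ≠ 0 := Nat.cast_ne_zero.mpr n.factorial_ne_zero
        rw [hsplit, div_eq_div_iff
          (mul_ne_zero (mul_ne_zero hx0 hIcc) (hene i hi))
          (mul_ne_zero (mul_ne_zero hx0 (div_ne_zero hIcc hfac)) (hene i hi))]
        field_simp
end

section
/- Let n be a natural number and let x be a real number with x ≠ -k for every k ∈ {0, 1, …, n}. Then ∑_{k=0}^{n} (-1)^k · C(n, k) / (x+k) = n! / ∏_{k=0}^{n} (x+k). -/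
/-- Classical partial fraction / Beta identity:
`∑_{k=0}^{n} (-1)^k C(n,k)/(x+k) = n! / ∏_{k=0}^{n} (x+k)`. -/
theorem sum_alternating_inv_eq (n : ℕ) (x : ℝ) (hx : ∀ k : ℕ, k ≤ n → x ≠ -(k : ℝ)) :
    ∑ k ∈ Finset.range (n + 1), (-1 : ℝ) ^ k * (n.choose k : ℝ) / (x + (k : ℝ)) =
      (n.factorial : ℝ) / ∏ k ∈ Finset.range (n + 1), (x + (k : ℝ)) := by
  induction n generalizing x with
  | zero => simp
  | succ n ih =>
    have hx0 : ∀ k : ℕ, k ≤ n → x ≠ -(k:ℝ) := fun k hk => hx k (hk.trans (Nat.le_succ n))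
    have hx1 : ∀ k : ℕ, k ≤ n → x + 1 ≠ -(k:ℝ) := by
      intro k hk h
      apply hx (k+1) (Nat.succ_le_succ hk)
      push_cast; linarith
    have h1 := ih x hx0
    have h2 := ih (x+1) hx1
    -- denominators nonzero
    have hne : ∀ k : ℕ, k ≤ n + 1 → x + (k:ℝ) ≠ 0 := by
      intro k hk h
      exact hx k hk (by linarith)
    have hP : (∏ k ∈ Finset.range (n + 1), (x + (k : ℝ))) ≠ 0 := by
      apply Finset.prod_ne_zero_iff.2
      intro k hk
      exact hne k (by have := Finset.mem_range.1 hk; omega)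
    have hQ : (∏ k ∈ Finset.range (n + 1), (x + 1 + (k : ℝ))) ≠ 0 := by
      apply Finset.prod_ne_zero_iff.2
      intro k hk
      have : x + (↑(k+1) : ℝ) ≠ 0 := hne (k+1) (by
        have := Finset.mem_range.1 hk; omega)
      intro h; apply this; push_cast; linarith
    -- sum splitting
    have split : ∑ k ∈ Finset.range (n + 1 + 1), (-1 : ℝ) ^ k * ((n+1).choose k : ℝ) / (x + (k : ℝ))
        = (∑ k ∈ Finset.range (n + 1), (-1 : ℝ) ^ k * (n.choose k : ℝ) / (x + (k : ℝ)))
          - ∑ k ∈ Finset.range (n + 1), (-1 : ℝ) ^ k * (n.choose k : ℝ) / ((x+1) + (k : ℝ)) := by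
      rw [Finset.sum_range_succ' (fun k => (-1 : ℝ) ^ k * ((n+1).choose k : ℝ) / (x + (k : ℝ)))]
      have e : ∀ k ∈ Finset.range (n+1),
          (-1 : ℝ) ^ (k+1) * ((n+1).choose (k+1) : ℝ) / (x + ((k+1 : ℕ) : ℝ))
          = (-1 : ℝ) ^ (k+1) * (n.choose k : ℝ) / (x + ((k+1 : ℕ) : ℝ))
            + (-1 : ℝ) ^ (k+1) * (n.choose (k+1) : ℝ) / (x + ((k+1 : ℕ) : ℝ)) := by
        intro k _
        rw [Nat.choose_succ_succ]
        push_cast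
        ring
      rw [Finset.sum_congr rfl e, Finset.sum_add_distrib]
      have eA : ∑ k ∈ Finset.range (n+1),
          (-1 : ℝ) ^ (k+1) * (n.choose k : ℝ) / (x + ((k+1 : ℕ) : ℝ))
          = - ∑ k ∈ Finset.range (n + 1), (-1 : ℝ) ^ k * (n.choose k : ℝ) / ((x+1) + (k : ℝ)) := by
        rw [← Finset.sum_neg_distrib]
        apply Finset.sum_congr rfl
        intro k _
        push_cast
        ring_nf
      have eB : (∑ k ∈ Finset.range (n+1),
          (-1 : ℝ) ^ (k+1) * (n.choose (k+1) : ℝ) / (x + ((k+1 : ℕ) : ℝ)))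
          + (-1 : ℝ) ^ 0 * ((n+1).choose 0 : ℝ) / (x + ((0:ℕ) : ℝ))
          = ∑ k ∈ Finset.range (n + 1), (-1 : ℝ) ^ k * (n.choose k : ℝ) / (x + (k : ℝ)) := by
        have := (Finset.sum_range_succ' (fun k => (-1 : ℝ) ^ k * (n.choose k : ℝ) / (x + (k : ℝ))) (n+1)).symm
        calc (∑ k ∈ Finset.range (n+1),
              (-1 : ℝ) ^ (k+1) * (n.choose (k+1) : ℝ) / (x + ((k+1 : ℕ) : ℝ)))
              + (-1 : ℝ) ^ 0 * ((n+1).choose 0 : ℝ) / (x + ((0:ℕ) : ℝ))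
            = ∑ k ∈ Finset.range (n + 1 + 1), (-1 : ℝ) ^ k * (n.choose k : ℝ) / (x + (k : ℝ)) := by
              rw [Finset.sum_range_succ' (fun k => (-1 : ℝ) ^ k * (n.choose k : ℝ) / (x + (k : ℝ))) (n+1)]
              simp
          _ = ∑ k ∈ Finset.range (n + 1), (-1 : ℝ) ^ k * (n.choose k : ℝ) / (x + (k : ℝ)) := by
              rw [Finset.sum_range_succ]
              simp
      linarith [eA, eB]
    rw [split, h1]
    have h2' : ∑ k ∈ Finset.range (n + 1), (-1 : ℝ) ^ k * (n.choose k : ℝ) / ((x+1) + (k : ℝ))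
        = (n.factorial : ℝ) / ∏ k ∈ Finset.range (n + 1), (x + 1 + (k : ℝ)) := h2
    rw [h2']
    -- product identities
    have p1 : ∏ k ∈ Finset.range (n + 1 + 1), (x + (k : ℝ))
        = (∏ k ∈ Finset.range (n + 1), (x + (k : ℝ))) * (x + ((n+1 : ℕ) : ℝ)) :=
      Finset.prod_range_succ _ _
    have p2 : ∏ k ∈ Finset.range (n + 1 + 1), (x + (k : ℝ))
        = (∏ k ∈ Finset.range (n + 1), (x + 1 + (k : ℝ))) * x := by
      rw [Finset.prod_range_succ' (fun k => x + (k : ℝ))]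
      push_cast
      ring_nf
    have hx0' : x ≠ 0 := by
      have := hx 0 (Nat.zero_le _); simpa using this
    have hR : x + ((n+1 : ℕ) : ℝ) ≠ 0 := hne (n+1) le_rfl
    have hp2 : (∏ k ∈ Finset.range (n + 1), (x + 1 + (k : ℝ))) * x
        = (∏ k ∈ Finset.range (n + 1), (x + (k : ℝ))) * (x + ((n+1 : ℕ) : ℝ)) := by
      rw [← p2, p1]
    rw [Nat.factorial_succ, p1]
    rw [div_sub_div _ _ hP hQ, div_eq_div_iff (mul_ne_zero hP hQ) (mul_ne_zero hP hR)]
    push_cast at hp2 ⊢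
    linear_combination (n.factorial : ℝ) * (∏ k ∈ Finset.range (n + 1), (x + (k : ℝ))) * hp2
end

section
/- Let n be a natural number, let f be a real polynomial of degree at most n, and let x, y be real numbers with x ≠ -k for every k ∈ {0, 1, …, n}. Then ∑_{k=0}^{n} (-1)^k · C(n, k) · f(y-k) / (x+k) = f(x+y) · ∑_{k=0}^{n} (-1)^k · C(n, k) / (x+k). -/
open Polynomial fwdDiff

private lemma melzak_fd_step (p : Polynomial ℝ) :
    fwdDiff (1:ℝ) (fun t => p.eval t) = fun t => (p.comp (X + C 1) - p).eval t := by
  funext t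
  simp [fwdDiff, eval_comp]

private lemma melzak_deg_step (p : Polynomial ℝ) :
    (p.comp (X + C 1) - p).natDegree < p.natDegree ∨ p.comp (X + C 1) - p = 0 := by
  rcases eq_or_ne (p.comp (X + C 1) - p) 0 with h | h
  · exact Or.inr h
  rcases Nat.eq_zero_or_pos p.natDegree with h0 | h0
  · exfalso
    obtain ⟨c, rfl⟩ := Polynomial.natDegree_eq_zero.mp h0
    simp at h
  left
  have hq1 : (X + C (1:ℝ)).natDegree = 1 := by
    simpa using Polynomial.natDegree_X_add_C (1:ℝ)
  have hp0 : p ≠ 0 := by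
    intro hp; rw [hp] at h0; simp at h0
  have hc0 : p.comp (X + C 1) ≠ 0 := by
    intro hc
    have h1 : (p.comp (X + C 1)).natDegree = p.natDegree := by
      rw [Polynomial.natDegree_comp, hq1, mul_one]
    rw [hc] at h1
    simp at h1
    omega
  have hdeg : (p.comp (X + C 1)).degree = p.degree := by
    have h1 : (p.comp (X + C 1)).natDegree = p.natDegree := by
      rw [Polynomial.natDegree_comp, hq1, mul_one]
    rw [Polynomial.degree_eq_natDegree hc0, Polynomial.degree_eq_natDegree hp0, h1]
  have hlc : (p.comp (X + C 1)).leadingCoeff = p.leadingCoeff := by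
    rw [Polynomial.leadingCoeff_comp (by rw [hq1]; norm_num)]
    have hm : (X + C (1:ℝ)).leadingCoeff = 1 := (Polynomial.monic_X_add_C (1:ℝ)).leadingCoeff
    rw [hm, one_pow, mul_one]
  have hlt := Polynomial.degree_sub_lt hdeg hc0 hlc
  rw [hdeg] at hlt
  exact Polynomial.natDegree_lt_natDegree h hlt

private lemma melzak_fd_zero (n : ℕ) (p : Polynomial ℝ)
    (hp : p.natDegree < n ∨ p = 0) :
    (fwdDiff (1:ℝ))^[n] (fun t => p.eval t) = 0 := by
  induction n generalizing p with
  | zero =>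
    rcases hp with h | rfl
    · omega
    · funext t; simp
  | succ n ih =>
    rw [Function.iterate_succ_apply, melzak_fd_step]
    apply ih
    rcases hp with h | rfl
    · rcases melzak_deg_step p with h' | h'
      · exact Or.inl (by omega)
      · exact Or.inr h'
    · right; simp

private lemma melzak_alt_sum (n : ℕ) (p : Polynomial ℝ)
    (hp : p.natDegree < n ∨ p = 0) (x : ℝ) :
    ∑ k ∈ Finset.range (n + 1),
      (-1 : ℝ) ^ k * (n.choose k : ℝ) * p.eval (x + (k : ℝ)) = 0 := by
  have h := fwdDiff_iter_eq_sum_shift (1:ℝ) (fun t => p.eval t) n x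
  rw [melzak_fd_zero n p hp] at h
  have h' : (0:ℝ) = ∑ k ∈ Finset.range (n + 1),
      (-1 : ℝ) ^ (n - k) * (n.choose k : ℝ) * p.eval (x + (k : ℝ)) := by
    simpa [zsmul_eq_mul, nsmul_eq_mul, mul_assoc] using h
  have key : ∀ k ∈ Finset.range (n + 1),
      (-1 : ℝ) ^ k * (n.choose k : ℝ) * p.eval (x + (k : ℝ)) =
      (-1 : ℝ) ^ n * ((-1 : ℝ) ^ (n - k) * (n.choose k : ℝ) * p.eval (x + (k : ℝ))) := by
    intro k hk
    rw [Finset.mem_range] at hk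
    have hpow : (-1 : ℝ) ^ n = (-1 : ℝ) ^ (n - k) * (-1 : ℝ) ^ k := by
      rw [← pow_add]; congr 1; omega
    have hsq : (-1 : ℝ) ^ (n - k) * (-1 : ℝ) ^ (n - k) = 1 := by
      rw [← pow_add, Even.neg_one_pow ⟨n - k, rfl⟩]
    rw [hpow]
    linear_combination (-((-1 : ℝ) ^ k * (n.choose k : ℝ) * p.eval (x + (k : ℝ)))) * hsq
  rw [Finset.sum_congr rfl key, ← Finset.mul_sum, ← h', mul_zero]

/-- Key intermediate step in the elementary proof of Melzak's identity:
`∑_{k=0}^{n} (-1)^k C(n,k) f(y-k)/(x+k) = f(x+y) ∑_{k=0}^{n} (-1)^k C(n,k)/(x+k)`. -/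
theorem melzak_intermediate (n : ℕ) (f : Polynomial ℝ) (hf : f.natDegree ≤ n)
    (x y : ℝ) (hx : ∀ k : ℕ, k ≤ n → x ≠ -(k : ℝ)) :
    ∑ k ∈ Finset.range (n + 1),
        (-1 : ℝ) ^ k * (n.choose k : ℝ) * f.eval (y - (k : ℝ)) / (x + (k : ℝ)) =
      f.eval (x + y) *
        ∑ k ∈ Finset.range (n + 1), (-1 : ℝ) ^ k * (n.choose k : ℝ) / (x + (k : ℝ)) := by
  set c := f.eval (x + y) with hc
  set g : Polynomial ℝ := f.comp (C (x + y) - X) - C c with hg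
  have hg_eval : ∀ t : ℝ, g.eval t = f.eval (x + y - t) - c := by
    intro t; simp [hg, eval_comp]
  have hg0 : g.eval 0 = 0 := by simp [hg_eval, hc]
  have hXdvd : X ∣ g := by
    have := (Polynomial.dvd_iff_isRoot (p := g) (a := 0)).mpr hg0
    simpa using this
  obtain ⟨r, hr⟩ := hXdvd
  have hgdeg : g.natDegree ≤ n := by
    have h1 : (f.comp (C (x + y) - X)).natDegree ≤ n := by
      rw [Polynomial.natDegree_comp]
      have h2 : (C (x + y) - X).natDegree = 1 := by
        rw [Polynomial.natDegree_sub_eq_right_of_natDegree_lt] <;> simp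
      rw [h2, mul_one]; exact hf
    calc g.natDegree ≤ max (f.comp (C (x + y) - X)).natDegree (C c).natDegree :=
          Polynomial.natDegree_sub_le _ _
      _ ≤ n := max_le h1 (by simp)
  have hrdeg : r.natDegree < n ∨ r = 0 := by
    rcases eq_or_ne r 0 with h | h
    · exact Or.inr h
    · left
      have : g.natDegree = 1 + r.natDegree := by
        rw [hr, Polynomial.natDegree_mul Polynomial.X_ne_zero h, Polynomial.natDegree_X]
      omega
  have hxk : ∀ k ∈ Finset.range (n + 1), x + (k : ℝ) ≠ 0 := by
    intro k hk
    rw [Finset.mem_range] at hk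
    have := hx k (by omega)
    intro h0
    exact this (by linarith)
  rw [Finset.mul_sum, ← sub_eq_zero, ← Finset.sum_sub_distrib]
  have key : ∀ k ∈ Finset.range (n + 1),
      (-1 : ℝ) ^ k * (n.choose k : ℝ) * f.eval (y - (k : ℝ)) / (x + (k : ℝ)) -
        c * ((-1 : ℝ) ^ k * (n.choose k : ℝ) / (x + (k : ℝ))) =
      (-1 : ℝ) ^ k * (n.choose k : ℝ) * r.eval (x + (k : ℝ)) := by
    intro k hk
    have hne := hxk k hk
    have hfy : f.eval (y - (k : ℝ)) - c = (x + (k : ℝ)) * r.eval (x + (k : ℝ)) := by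
      have h1 : g.eval (x + (k : ℝ)) = f.eval (y - (k : ℝ)) - c := by
        rw [hg_eval]; ring_nf
      have h2 : g.eval (x + (k : ℝ)) = (x + (k : ℝ)) * r.eval (x + (k : ℝ)) := by
        rw [hr]; simp
      rw [← h1, h2]
    field_simp
    linear_combination (n.choose k : ℝ) * hfy
  rw [Finset.sum_congr rfl key]
  exact melzak_alt_sum n r hrdeg x
end
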